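/- Under the standing comparison assumptions for two solutions of the slow-down system on [0,T] with T₁ = T/2, setting β = (1−μ)/2^{α+2}, one has for all 0 ≤ t ≤ T₁: Δs₂(t) ≤ (Δs₂(0)/s₂(0))·s₂(t)·(1 + 2^α·C₀·s₂(0)^{2α}·t)^{−β}. -/

import Mathlib

set_option maxHeartbeats 2000000 in
/-- Lemma "spread-in-slowdown", first estimate: under the standing comparison
assumptions for two solutions `s = (s₁,s₂)` and `s̃ = (u₁,u₂)` of the slow-down
system on `[0,T]` with `T₁ = T/2` and `β = (1-μ)/2^{α+2}`, for `0 ≤ t ≤ T₁`,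
`Δs₂(t) ≤ (Δs₂(0)/s₂(0)) s₂(t) (1 + 2^α C₀ s₂(0)^{2α} t)^{-β}`. -/
theorem spread_in_slowdown_first
    (lam α : ℝ) (hlam : 1 < lam) (hα : α ∈ Set.Ioo (0 : ℝ) 1)
    (p : ℤ) (hp : 3 ≤ p)
    (L C₀ : ℝ)
    (hL : L = Real.log lam * ((p : ℝ) / 2) ^ (2 * α))
    (hC₀ : C₀ = 2 * α * L)
    (T μ : ℝ) (hT : 0 < T) (hμ : μ ∈ Set.Ioo (0 : ℝ) 1)
    (s₁ s₂ u₁ u₂ : ℝ → ℝ)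
    (hs₁ : ∀ t ∈ Set.Icc (0 : ℝ) T,
      HasDerivAt s₁ (L * s₁ t * (s₁ t ^ 2 + s₂ t ^ 2) ^ α) t)
    (hs₂ : ∀ t ∈ Set.Icc (0 : ℝ) T,
      HasDerivAt s₂ (-(L * s₂ t * (s₁ t ^ 2 + s₂ t ^ 2) ^ α)) t)
    (hu₁ : ∀ t ∈ Set.Icc (0 : ℝ) T,
      HasDerivAt u₁ (L * u₁ t * (u₁ t ^ 2 + u₂ t ^ 2) ^ α) t)
    (hu₂ : ∀ t ∈ Set.Icc (0 : ℝ) T,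
      HasDerivAt u₂ (-(L * u₂ t * (u₁ t ^ 2 + u₂ t ^ 2) ^ α)) t)
    (hpos : ∀ t ∈ Set.Icc (0 : ℝ) T,
      0 < s₁ t ∧ 0 < s₂ t ∧ 0 < u₁ t ∧ 0 < u₂ t)
    (horder₁ : ∀ t ∈ Set.Icc (0 : ℝ) (T / 2), s₁ t ≤ s₂ t)
    (horder₂ : ∀ t ∈ Set.Icc (T / 2) T, s₂ t ≤ s₁ t)
    (hΔpos : ∀ t ∈ Set.Icc (0 : ℝ) T, 0 < u₂ t - s₂ t)
    (hΔctrl : ∀ t ∈ Set.Icc (0 : ℝ) T, |u₁ t - s₁ t| ≤ μ * (u₂ t - s₂ t))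
    (hinit : (u₂ 0 - s₂ 0) / s₂ 0 ≤ (1 - μ) / 72)
    (t : ℝ) (ht : 0 ≤ t) (ht₁ : t ≤ T / 2) :
    u₂ t - s₂ t ≤ ((u₂ 0 - s₂ 0) / s₂ 0) * s₂ t *
      (1 + 2 ^ α * C₀ * s₂ 0 ^ (2 * α) * t) ^ (-((1 - μ) / 2 ^ (α + 2))) := by
  subst hC₀
  obtain ⟨hα0, hα1⟩ := hα
  obtain ⟨hμ0, hμ1⟩ := hμ
  have hT2 : 0 < T / 2 := by linarith
  have hsub : Set.Icc (0:ℝ) (T/2) ⊆ Set.Icc (0:ℝ) T := Set.Icc_subset_Icc le_rfl (by linarith)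
  have hL0 : 0 < L := by
    rw [hL]
    refine mul_pos (Real.log_pos hlam) (Real.rpow_pos_of_pos ?_ _)
    have : (3:ℝ) ≤ (p:ℝ) := by exact_mod_cast hp
    linarith
  have h0mem : (0:ℝ) ∈ Set.Icc (0:ℝ) (T/2) := ⟨le_rfl, hT2.le⟩
  have htmem : t ∈ Set.Icc (0:ℝ) (T/2) := ⟨ht, ht₁⟩
  have s0pos : 0 < s₂ 0 := (hpos 0 (hsub h0mem)).2.1
  set K : ℝ := 2 ^ α * (2 * α * L) * s₂ 0 ^ (2 * α) with hK
  set βp : ℝ := (1 - μ) / 2 ^ (α + 2) with hβ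
  have h2pow : (0:ℝ) < 2 ^ (α+2) := Real.rpow_pos_of_pos two_pos _
  have hβpos : 0 < βp := div_pos (by linarith) h2pow
  have hKpos : 0 < K := by
    refine mul_pos (mul_pos (Real.rpow_pos_of_pos two_pos _) ?_) (Real.rpow_pos_of_pos s0pos _)
    positivity
  -- pointwise comparison facts on the first half
  have hBpt : ∀ x ∈ Set.Icc (0:ℝ) (T/2),
      (1-μ) * (u₂ x + s₂ x) * (u₂ x - s₂ x) ≤
        (u₁ x ^ 2 + u₂ x ^ 2) - (s₁ x ^ 2 + s₂ x ^ 2) ∧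
      s₁ x ^ 2 + s₂ x ^ 2 ≤ u₁ x ^ 2 + u₂ x ^ 2 ∧ u₁ x ≤ u₂ x := by
    intro x hx
    have hx' := hsub hx
    obtain ⟨p1, p2, p3, p4⟩ := hpos x hx'
    have hd := hΔpos x hx'
    have hctl := abs_le.1 (hΔctrl x hx')
    have ho := horder₁ x hx
    have hu12 : u₁ x ≤ u₂ x := by
      have hh : μ * (u₂ x - s₂ x) ≤ 1 * (u₂ x - s₂ x) :=
        mul_le_mul_of_nonneg_right hμ1.le hd.le
      linarith [hctl.2]
    have h1 : u₁ x + s₁ x ≤ u₂ x + s₂ x := by linarith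
    have hquant : (1-μ) * (u₂ x + s₂ x) * (u₂ x - s₂ x) ≤
        (u₁ x ^ 2 + u₂ x ^ 2) - (s₁ x ^ 2 + s₂ x ^ 2) := by
      nlinarith [mul_le_mul_of_nonneg_right h1 (mul_nonneg hμ0.le hd.le),
        mul_le_mul_of_nonneg_left hctl.1 (by linarith : (0:ℝ) ≤ u₁ x + s₁ x), sq_nonneg (u₁ x - s₁ x)]
    refine ⟨hquant, ?_, hu12⟩
    linarith [hquant, (mul_pos (mul_pos (by linarith : (0:ℝ) < 1 - μ)
      (by linarith : (0:ℝ) < u₂ x + s₂ x)) hd)]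
  -- derivative of G = (u₂ - s₂)/s₂
  have hGder : ∀ x ∈ Set.Icc (0:ℝ) T,
      HasDerivAt (fun τ => (u₂ τ - s₂ τ) / s₂ τ)
        (-(L * u₂ x * ((u₁ x ^ 2 + u₂ x ^ 2) ^ α - (s₁ x ^ 2 + s₂ x ^ 2) ^ α)) / s₂ x) x := by
    intro x hx
    obtain ⟨p1, p2, p3, p4⟩ := hpos x hx
    have h := ((hu₂ x hx).sub (hs₂ x hx)).div (hs₂ x hx) p2.ne'
    convert h using 1
    · rfl
    · rfl
    · rfl
    simp only [Pi.sub_apply]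
    field_simp
    ring
  have hGcont : ContinuousOn (fun τ => (u₂ τ - s₂ τ) / s₂ τ) (Set.Icc (0:ℝ) (T/2)) :=
    fun x hx => (hGder x (hsub hx)).continuousAt.continuousWithinAt
  -- G is antitone
  have hGanti : AntitoneOn (fun τ => (u₂ τ - s₂ τ) / s₂ τ) (Set.Icc (0:ℝ) (T/2)) := by
    apply antitoneOn_of_deriv_nonpos (convex_Icc _ _) hGcont
    · intro x hx
      rw [interior_Icc] at hx
      exact (hGder x (hsub (Set.Ioo_subset_Icc_self hx))).differentiableAt.differentiableWithinAt
    · intro x hx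
      rw [interior_Icc] at hx
      have hx2 := Set.Ioo_subset_Icc_self hx
      rw [(hGder x (hsub hx2)).deriv]
      obtain ⟨p1, p2, p3, p4⟩ := hpos x (hsub hx2)
      have hRle := (hBpt x hx2).2.1
      have hrp : (s₁ x ^ 2 + s₂ x ^ 2) ^ α ≤ (u₁ x ^ 2 + u₂ x ^ 2) ^ α :=
        Real.rpow_le_rpow (by positivity) hRle hα0.le
      apply div_nonpos_of_nonpos_of_nonneg _ p2.le
      have : 0 ≤ L * u₂ x * ((u₁ x ^ 2 + u₂ x ^ 2) ^ α - (s₁ x ^ 2 + s₂ x ^ 2) ^ α) := by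
        apply mul_nonneg (mul_nonneg hL0.le p4.le) (by linarith)
      linarith
  have hGbd : ∀ x ∈ Set.Icc (0:ℝ) (T/2), (u₂ x - s₂ x) / s₂ x ≤ (1-μ)/72 :=
    fun x hx => (hGanti h0mem hx hx.1).trans hinit
  -- Lemma A : s₂ 0 ^ (2α) ≤ s₂ x ^ (2α) * (1 + K x)
  have hφder : ∀ x ∈ Set.Icc (0:ℝ) T,
      HasDerivAt (fun τ => s₂ τ ^ (-(2*α)) - 2 ^ α * (2*α*L) * τ)
        ((-(L * s₂ x * (s₁ x ^ 2 + s₂ x ^ 2) ^ α)) * (-(2*α)) * s₂ x ^ (-(2*α)-1)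
          - 2 ^ α * (2*α*L) * 1) x := by
    intro x hx
    exact ((hs₂ x hx).rpow_const (Or.inl (hpos x hx).2.1.ne')).sub
      ((hasDerivAt_id x).const_mul (2 ^ α * (2*α*L)))
  have hφanti : AntitoneOn (fun τ => s₂ τ ^ (-(2*α)) - 2 ^ α * (2*α*L) * τ)
      (Set.Icc (0:ℝ) (T/2)) := by
    apply antitoneOn_of_deriv_nonpos (convex_Icc _ _)
    · exact fun x hx => (hφder x (hsub hx)).continuousAt.continuousWithinAt
    · intro x hx
      rw [interior_Icc] at hx
      exact (hφder x (hsub (Set.Ioo_subset_Icc_self hx))).differentiableAt.differentiableWithinAt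
    · intro x hx
      rw [interior_Icc] at hx
      have hx2 := Set.Ioo_subset_Icc_self hx
      rw [(hφder x (hsub hx2)).deriv]
      obtain ⟨p1, p2, p3, p4⟩ := hpos x (hsub hx2)
      have key1 : s₂ x ^ (-(2*α)-1) * s₂ x = s₂ x ^ (-(2*α)) := by
        rw [← Real.rpow_add_one p2.ne']; congr 1; ring
      have hRs2 : s₁ x ^ 2 + s₂ x ^ 2 ≤ 2 * s₂ x ^ 2 := by
        linarith [pow_le_pow_left₀ p1.le (horder₁ x hx2) 2]
      have key2 : (s₁ x ^ 2 + s₂ x ^ 2) ^ α ≤ 2 ^ α * s₂ x ^ (2*α) := by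
        calc (s₁ x ^ 2 + s₂ x ^ 2) ^ α ≤ (2 * s₂ x ^ 2) ^ α :=
              Real.rpow_le_rpow (by positivity) hRs2 hα0.le
          _ = 2 ^ α * (s₂ x ^ 2) ^ α := Real.mul_rpow (by norm_num) (by positivity)
          _ = 2 ^ α * s₂ x ^ (2*α) := by
              rw [← Real.rpow_natCast (s₂ x) 2, ← Real.rpow_mul p2.le]; norm_num
      have key3 : s₂ x ^ (2*α) * s₂ x ^ (-(2*α)) = 1 := by
        rw [← Real.rpow_add p2]; simp
      have hinvnn : (0:ℝ) ≤ s₂ x ^ (-(2*α)) := Real.rpow_nonneg p2.le _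
      have h4 : (s₁ x ^ 2 + s₂ x ^ 2) ^ α * s₂ x ^ (-(2*α)) ≤ 2 ^ α := by
        calc (s₁ x ^ 2 + s₂ x ^ 2) ^ α * s₂ x ^ (-(2*α))
            ≤ (2 ^ α * s₂ x ^ (2*α)) * s₂ x ^ (-(2*α)) :=
              mul_le_mul_of_nonneg_right key2 hinvnn
          _ = 2 ^ α * (s₂ x ^ (2*α) * s₂ x ^ (-(2*α))) := by ring
          _ = 2 ^ α := by rw [key3, mul_one]
      have hv : (-(L * s₂ x * (s₁ x ^ 2 + s₂ x ^ 2) ^ α)) * (-(2*α)) * s₂ x ^ (-(2*α)-1)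
          - 2 ^ α * (2*α*L) * 1
          = 2*α*L * ((s₁ x ^ 2 + s₂ x ^ 2) ^ α * (s₂ x ^ (-(2*α)-1) * s₂ x))
            - 2 ^ α * (2*α*L) := by ring
      rw [hv, key1]
      have hnn : (0:ℝ) ≤ 2*α*L := by positivity
      have h5 := mul_le_mul_of_nonneg_left h4 hnn
      linarith [h5]
  have hA : ∀ x ∈ Set.Icc (0:ℝ) (T/2), s₂ 0 ^ (2*α) ≤ s₂ x ^ (2*α) * (1 + K * x) := by
    intro x hx
    have h := hφanti h0mem hx hx.1
    simp only [mul_zero, sub_zero] at h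
    have p2 : 0 < s₂ x := (hpos x (hsub hx)).2.1
    have hApos : 0 < s₂ x ^ (2*α) := Real.rpow_pos_of_pos p2 _
    have hBpos : 0 < s₂ 0 ^ (2*α) := Real.rpow_pos_of_pos s0pos _
    rw [Real.rpow_neg p2.le, Real.rpow_neg s0pos.le] at h
    have h3 : (s₂ x ^ (2*α))⁻¹ ≤ (s₂ 0 ^ (2*α))⁻¹ + 2 ^ α * (2*α*L) * x := by linarith
    have hxnn : 0 ≤ x := hx.1
    calc s₂ 0 ^ (2*α) = (s₂ x ^ (2*α) * s₂ 0 ^ (2*α)) * (s₂ x ^ (2*α))⁻¹ := by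
          field_simp
      _ ≤ (s₂ x ^ (2*α) * s₂ 0 ^ (2*α)) * ((s₂ 0 ^ (2*α))⁻¹ + 2 ^ α * (2*α*L) * x) :=
          mul_le_mul_of_nonneg_left h3 (by positivity)
      _ = s₂ x ^ (2*α) * (1 + K * x) := by
          rw [hK]; field_simp
  -- constant computations
  have hKβ : K * βp = α * L * (1-μ) * s₂ 0 ^ (2*α) / 2 := by
    have h2 : (2:ℝ) ^ (α+2) = 2 ^ α * 4 := by
      rw [Real.rpow_add two_pos]; norm_num [Real.rpow_two]
    rw [hK, hβ, h2]
    have h2α : (0:ℝ) < 2 ^ α := Real.rpow_pos_of_pos two_pos _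
    field_simp
    ring
  have hc1 : (1/4:ℝ) ≤ (2*(73/72)^2 : ℝ) ^ (α-1) := by
    have h1 : (2*(73/72)^2 : ℝ) ^ (-1:ℝ) ≤ (2*(73/72)^2 : ℝ) ^ (α-1) :=
      Real.rpow_le_rpow_of_exponent_le (by norm_num) (by linarith)
    rw [Real.rpow_neg_one] at h1
    have : (1/4:ℝ) ≤ ((2*(73/72)^2 : ℝ))⁻¹ := by norm_num
    linarith
  -- derivative bound for F = G * (1+Kτ)^βp
  have hF'le : ∀ x ∈ Set.Icc (0:ℝ) (T/2),
      (-(L * u₂ x * ((u₁ x ^ 2 + u₂ x ^ 2) ^ α - (s₁ x ^ 2 + s₂ x ^ 2) ^ α)) / s₂ x)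
          * (1 + K * x) ^ βp
        + ((u₂ x - s₂ x) / s₂ x) * (K * 1 * βp * (1 + K * x) ^ (βp - 1)) ≤ 0 := by
    intro x hx
    have hx' := hsub hx
    obtain ⟨p1, p2, p3, p4⟩ := hpos x hx'
    have hd := hΔpos x hx'
    obtain ⟨hquant, hRle, hu12⟩ := hBpt x hx
    have hbase : 0 < 1 + K * x := by linarith [mul_nonneg hKpos.le hx.1]
    have hP : 0 < (1 + K * x) ^ βp := Real.rpow_pos_of_pos hbase _
    set Rs : ℝ := s₁ x ^ 2 + s₂ x ^ 2 with hRs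
    set Ru : ℝ := u₁ x ^ 2 + u₂ x ^ 2 with hRu
    have hRspos : 0 < Rs := by positivity
    have hRupos : 0 < Ru := by positivity
    have hΔRnn : 0 ≤ Ru ^ α - Rs ^ α :=
      sub_nonneg.2 (Real.rpow_le_rpow hRspos.le hRle hα0.le)
    -- u₂ ≤ (73/72) s₂
    have hgle := hGbd x hx
    have hu73 : u₂ x ≤ (73/72) * s₂ x := by
      have h' : (u₂ x - s₂ x) * 72 ≤ (1 - μ) * s₂ x :=
        (div_le_div_iff₀ p2 (by norm_num : (0:ℝ) < 72)).1 hgle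
      linarith [mul_nonneg hμ0.le p2.le]
    have hRuB : Ru ≤ (2*(73/72)^2) * s₂ x ^ 2 := by
      rw [hRu]
      linarith [pow_le_pow_left₀ p3.le hu12 2, pow_le_pow_left₀ p4.le hu73 2]
    -- Bernoulli step
    have hbern : α * Ru ^ (α-1) * (Ru - Rs) ≤ Ru ^ α - Rs ^ α := by
      have hz : -1 ≤ (Rs - Ru) / Ru := by
        rw [le_div_iff₀ hRupos]; linarith
      have h := rpow_one_add_le_one_add_mul_self hz hα0.le hα1.le
      have h1 : 1 + (Rs - Ru) / Ru = Rs / Ru := by field_simp; ring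
      rw [h1, Real.div_rpow hRspos.le hRupos.le] at h
      have h2 := mul_le_mul_of_nonneg_right h (Real.rpow_nonneg hRupos.le α)
      rw [div_mul_cancel₀ _ (ne_of_gt (Real.rpow_pos_of_pos hRupos α))] at h2
      rw [Real.rpow_sub_one hRupos.ne']
      have expand : (1 + α * ((Rs - Ru) / Ru)) * Ru ^ α
          = Ru ^ α - α * (Ru ^ α / Ru) * (Ru - Rs) := by
        field_simp; ring
      rw [expand] at h2
      linarith
    -- lower bound of Ru^(α-1)
    have hmono : ((2*(73/72)^2) * s₂ x ^ 2) ^ (α-1) ≤ Ru ^ (α-1) :=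
      Real.rpow_le_rpow_of_nonpos hRupos hRuB (by linarith)
    have hBA : ((2*(73/72)^2) * s₂ x ^ 2 : ℝ) ^ (α-1)
        = (2*(73/72)^2 : ℝ) ^ (α-1) * s₂ x ^ (2*(α-1)) := by
      rw [Real.mul_rpow (by norm_num) (by positivity),
        ← Real.rpow_natCast (s₂ x) 2, ← Real.rpow_mul p2.le]
      norm_num
    set c1 : ℝ := (2*(73/72)^2 : ℝ) ^ (α-1) with hc1def
    have hc1nn : (0:ℝ) ≤ c1 := by linarith
    have hm1 : c1 * s₂ x ^ (2*(α-1)) ≤ Ru ^ (α-1) := by rw [← hBA]; exact hmono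
    set A2 : ℝ := s₂ x ^ (2*(α-1)) with hA2def
    have hA2nn : 0 ≤ A2 := Real.rpow_nonneg p2.le _
    have hmm : (c1 * A2) * ((1-μ) * (u₂ x + s₂ x) * (u₂ x - s₂ x))
        ≤ Ru ^ (α-1) * (Ru - Rs) := by
      apply mul_le_mul hm1 hquant _ (Real.rpow_nonneg hRupos.le _)
      exact mul_nonneg (mul_nonneg (by linarith) (by linarith)) hd.le
    have key : α * ((c1 * A2) * ((1-μ) * (u₂ x + s₂ x) * (u₂ x - s₂ x)))
        ≤ Ru ^ α - Rs ^ α := by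
      have := mul_le_mul_of_nonneg_left hmm hα0.le
      linarith [hbern]
    set d : ℝ := u₂ x - s₂ x with hddef
    set a : ℝ := s₂ x with hadef
    have hid : A2 * a * a = a ^ (2*α) := by
      rw [hA2def, ← Real.rpow_add_one p2.ne', ← Real.rpow_add_one p2.ne']
      congr 1; ring
    have hApos : 0 < a ^ (2*α) := Real.rpow_pos_of_pos p2 _
    -- key2 : 2α(1-μ)c1 A d ≤ u₂ (Ru^α - Rs^α)
    have hkey2 : 2*α*(1-μ)*c1*(a ^ (2*α))*d ≤ u₂ x * (Ru ^ α - Rs ^ α) := by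
      have h2 : a * (Ru ^ α - Rs ^ α) ≤ u₂ x * (Ru ^ α - Rs ^ α) :=
        mul_le_mul_of_nonneg_right (by linarith) hΔRnn
      have h3 : a * (α * ((c1 * A2) * ((1-μ) * (u₂ x + a) * d)))
          ≤ a * (Ru ^ α - Rs ^ α) := mul_le_mul_of_nonneg_left key p2.le
      have h4 : a * (α * ((c1 * A2) * ((1-μ) * (2*a) * d)))
          ≤ a * (α * ((c1 * A2) * ((1-μ) * (u₂ x + a) * d))) := by
        have hnn := mul_nonneg (mul_nonneg (mul_nonneg (mul_nonneg
          (mul_nonneg p2.le hα0.le) hc1nn) hA2nn) (by linarith : (0:ℝ) ≤ 1-μ))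
          (mul_nonneg hd.le (by linarith : 0 ≤ u₂ x - a))
        linarith [hnn]
      have h5 : a * (α * ((c1 * A2) * ((1-μ) * (2*a) * d)))
          = 2*α*(1-μ)*c1*(a ^ (2*α))*d := by
        rw [← hid]; ring
      linarith [h2, h3, h4, h5]
    have hS := hA x hx
    have hmain : d * (K * βp) ≤ (L * u₂ x * (Ru ^ α - Rs ^ α)) * (1 + K * x) := by
      have hF0 : 0 ≤ α*L*(1-μ)*(s₂ 0 ^ (2*α))*d :=
        mul_nonneg (mul_nonneg (mul_nonneg (mul_nonneg hα0.le hL0.le)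
          (by linarith)) (Real.rpow_nonneg s0pos.le _)) hd.le
      have step1 : d * (K * βp) ≤ 2*α*L*(1-μ)*c1*(s₂ 0 ^ (2*α))*d := by
        rw [hKβ]
        linarith [mul_le_mul_of_nonneg_left hc1 hF0]
      have hf : 0 ≤ 2*α*(1-μ)*c1*d :=
        mul_nonneg (mul_nonneg (mul_nonneg (by positivity) (by linarith)) hc1nn) hd.le
      have step2 : 2*α*(1-μ)*c1*(s₂ 0 ^ (2*α))*d
          ≤ 2*α*(1-μ)*c1*(a ^ (2*α))*d*(1 + K*x) := by
        have := mul_le_mul_of_nonneg_left hS hf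
        linarith [this]
      have step3 : (2*α*(1-μ)*c1*(a ^ (2*α))*d)*(1 + K*x)
          ≤ (u₂ x * (Ru ^ α - Rs ^ α)) * (1 + K*x) :=
        mul_le_mul_of_nonneg_right hkey2 hbase.le
      have step4 := mul_le_mul_of_nonneg_left step3 hL0.le
      linarith [mul_le_mul_of_nonneg_left step2 hL0.le, step4, step1]
    -- reduce goal to hmain
    have hQ : (1 + K*x) ^ (βp - 1) = (1 + K*x) ^ βp / (1 + K*x) :=
      Real.rpow_sub_one hbase.ne' βp
    have e1 : (-(L * u₂ x * (Ru ^ α - Rs ^ α)) / a) * (1 + K * x) ^ βp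
        + (d / a) * (K * 1 * βp * (1 + K * x) ^ (βp - 1))
        = ((d * (K * βp)) * (1 + K*x) ^ βp
            - ((L * u₂ x * (Ru ^ α - Rs ^ α)) * (1 + K*x)) * (1 + K*x) ^ βp)
          / (a * (1 + K*x)) := by
      rw [hQ]; field_simp; ring
    rw [e1]
    apply div_nonpos_of_nonpos_of_nonneg _ (by positivity)
    have := mul_le_mul_of_nonneg_right hmain hP.le
    linarith
  -- F = G * (1+Kτ)^βp is antitone on [0, T/2]
  have hFanti : AntitoneOn
      (fun τ => ((u₂ τ - s₂ τ) / s₂ τ) * (1 + K * τ) ^ βp) (Set.Icc (0:ℝ) (T/2)) := by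
    apply antitoneOn_of_deriv_nonpos (convex_Icc _ _)
    · apply hGcont.mul
      apply ContinuousOn.rpow_const
      · exact (continuous_const.add (continuous_const.mul continuous_id)).continuousOn
      · exact fun x _ => Or.inr hβpos.le
    · intro x hx
      rw [interior_Icc] at hx
      have hx2 := Set.Ioo_subset_Icc_self hx
      have hbase : 0 < 1 + K * x := by linarith [mul_nonneg hKpos.le hx2.1]
      have hF := (hGder x (hsub hx2)).mul
        ((((hasDerivAt_id x).const_mul K).const_add 1).rpow_const (p := βp) (Or.inl hbase.ne'))
      exact hF.differentiableAt.differentiableWithinAt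
    · intro x hx
      rw [interior_Icc] at hx
      have hx2 := Set.Ioo_subset_Icc_self hx
      have hbase : 0 < 1 + K * x := by linarith [mul_nonneg hKpos.le hx2.1]
      have hF := (hGder x (hsub hx2)).mul
        ((((hasDerivAt_id x).const_mul K).const_add 1).rpow_const (p := βp) (Or.inl hbase.ne'))
      simp only [id_eq] at hF
      rw [show (fun τ => (u₂ τ - s₂ τ) / s₂ τ * (1 + K * τ) ^ βp) = ((fun τ => (u₂ τ - s₂ τ) / s₂ τ) * fun y => (1 + K * y) ^ βp) from rfl, hF.deriv]
      exact hF'le x hx2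
  have hft := hFanti h0mem htmem ht
  simp only [mul_zero, add_zero, Real.one_rpow, mul_one] at hft
  -- hft : (u₂ t - s₂ t)/s₂ t * (1 + K*t)^βp ≤ (u₂ 0 - s₂ 0)/s₂ 0
  have stpos : 0 < s₂ t := (hpos t (hsub htmem)).2.1
  have hbase : 0 < 1 + K * t := by linarith [mul_nonneg hKpos.le ht]
  have hPt : 0 < (1 + K * t) ^ βp := Real.rpow_pos_of_pos hbase _
  rw [Real.rpow_neg hbase.le]
  have h2 : (u₂ t - s₂ t) * (1 + K * t) ^ βp ≤ (u₂ 0 - s₂ 0) / s₂ 0 * s₂ t := by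
    have h := mul_le_mul_of_nonneg_right hft stpos.le
    calc (u₂ t - s₂ t) * (1 + K * t) ^ βp
        = (u₂ t - s₂ t) / s₂ t * (1 + K * t) ^ βp * s₂ t := by
          field_simp
      _ ≤ (u₂ 0 - s₂ 0) / s₂ 0 * s₂ t := h
  rw [← sub_nonneg]
  have h3 : (u₂ 0 - s₂ 0) / s₂ 0 * s₂ t * ((1 + K * t) ^ βp)⁻¹ - (u₂ t - s₂ t)
      = ((u₂ 0 - s₂ 0) / s₂ 0 * s₂ t - (u₂ t - s₂ t) * (1 + K * t) ^ βp)
        * ((1 + K * t) ^ βp)⁻¹ := by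
    field_simp
  rw [h3]
  exact mul_nonneg (by linarith [h2]) (inv_nonneg.2 hPt.le)
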